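/- Let η' ∈ ℝ^n and let T₁, T₂ be disjoint index sets with |T₁| = bl, such that every coordinate of η' indexed by T₂ has absolute value at most every coordinate indexed by T₁ (i.e., |η'_j| ≤ |η'_i| for all j ∈ T₂, i ∈ T₁). Then ‖η'_{T₂}‖₂ ≤ (bl)^{-1/2} ‖η'_{T₁}‖₁, where η'_{T} denotes the restriction of η' to indices in T (zeroing out the rest) and |T₂| ≤ bl. -/

import Mathlib

noncomputable section

/-- The ℓ₂ norm of a vector in ℝⁿ. -/
def l2 {n : ℕ} (x : Fin n → ℝ) : ℝ := Real.sqrt (∑ i, (x i) ^ 2)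

/-- The ℓ₁ norm of a vector in ℝⁿ. -/
def l1 {n : ℕ} (x : Fin n → ℝ) : ℝ := ∑ i, |x i|

/-- Restriction of a vector to an index set (zero elsewhere). -/
def restr {n : ℕ} (x : Fin n → ℝ) (T : Finset (Fin n)) : Fin n → ℝ :=
  fun i => if i ∈ T then x i else 0

/-- Block-wise ℓ₂/ℓ₁ bound: if every coordinate of η' in T₂ is dominated in
    magnitude by every coordinate in T₁, |T₁| = bl and |T₂| ≤ bl, then
    ‖η'_{T₂}‖₂ ≤ (bl)^{-1/2} ‖η'_{T₁}‖₁. -/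
theorem stmt6 {n : ℕ} (bl : ℕ) (hbl : 0 < bl) (η' : Fin n → ℝ)
    (T₁ T₂ : Finset (Fin n)) (hdisj : Disjoint T₁ T₂) (hT₁ : T₁.card = bl)
    (hT₂ : T₂.card ≤ bl)
    (hdom : ∀ j ∈ T₂, ∀ i ∈ T₁, |η' j| ≤ |η' i|) :
    l2 (restr η' T₂) ≤ (Real.sqrt bl)⁻¹ * l1 (restr η' T₁) := by
  set S : ℝ := ∑ i ∈ T₁, |η' i| with hS
  have hS0 : 0 ≤ S := Finset.sum_nonneg fun i _ => abs_nonneg _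
  have hblR : (0:ℝ) < (bl:ℝ) := by exact_mod_cast hbl
  -- each coordinate in T₂ is bounded by S / bl
  have hbd : ∀ j ∈ T₂, |η' j| ≤ S / bl := by
    intro j hj
    rw [le_div_iff₀ hblR]
    calc |η' j| * bl = ∑ _i ∈ T₁, |η' j| := by
          rw [Finset.sum_const, hT₁, nsmul_eq_mul, mul_comm]
      _ ≤ S := Finset.sum_le_sum fun i hi => hdom j hj i hi
  -- l1 of restriction equals S
  have hl1 : l1 (restr η' T₁) = S := by
    unfold l1 restr
    rw [← Finset.sum_subset (Finset.subset_univ T₁)]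
    · exact Finset.sum_congr rfl fun i hi => by simp [hi]
    · intro i _ hi; simp [hi]
  -- l2 sum
  have hsum : ∑ i, (restr η' T₂ i) ^ 2 ≤ S ^ 2 / bl := by
    have : ∑ i, (restr η' T₂ i) ^ 2 = ∑ i ∈ T₂, (η' i) ^ 2 := by
      unfold restr
      rw [← Finset.sum_subset (Finset.subset_univ T₂)]
      · exact Finset.sum_congr rfl fun i hi => by simp [hi]
      · intro i _ hi; simp [hi]
    rw [this]
    calc ∑ i ∈ T₂, (η' i) ^ 2 ≤ ∑ _i ∈ T₂, (S / bl) ^ 2 := by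
          refine Finset.sum_le_sum fun i hi => ?_
          rw [← sq_abs (η' i)]
          exact pow_le_pow_left₀ (abs_nonneg _) (hbd i hi) 2
      _ = T₂.card * (S / bl) ^ 2 := by rw [Finset.sum_const, nsmul_eq_mul]
      _ ≤ bl * (S / bl) ^ 2 := by
          refine mul_le_mul_of_nonneg_right ?_ (sq_nonneg _)
          exact_mod_cast hT₂
      _ = S ^ 2 / bl := by field_simp
  have h2 : l2 (restr η' T₂) ≤ Real.sqrt (S ^ 2 / bl) :=
    Real.sqrt_le_sqrt hsum
  rw [hl1]
  refine h2.trans (le_of_eq ?_)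
  rw [Real.sqrt_div' _ hblR.le, Real.sqrt_sq hS0, div_eq_inv_mul]
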